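/- Let y_1, y_2, y_3 be three distinct collinear points in ℝ². Then there exist α = (α_1, α_2, α_3) ∈ ℝ³ and a nonzero vector a = (a_1, a_2, a_3) ∈ ℝ³ such that a_1 + a_2 + a_3 = 0, a_1 y_1 + a_2 y_2 + a_3 y_3 = 0 in ℝ², and D̃(α,Y) a = 0. (Consequently, for such α the two-dimensional Schrödinger operator with point interactions of strengths α at these three centres has an eigenvalue embedded at the threshold zero.) -/

import Mathlib

open Real Matrix
noncomputable section

/-- The real matrix `D̃(α,Y)`: diagonal entries `α_j`, off-diagonal entries
`(2π)⁻¹ log|y_j - y_k|`. -/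
def DtR (N : ℕ) (y : Fin N → EuclideanSpace ℝ (Fin 2)) (α : Fin N → ℝ) :
    Matrix (Fin N) (Fin N) ℝ :=
  Matrix.of fun j k => if j = k then α j else 1/(2*Real.pi) * Real.log ‖y j - y k‖

/-- For three distinct collinear points `y_1, y_2, y_3 ∈ ℝ²`,
there exist strengths `α ∈ ℝ³` and a nonzero `a ∈ ℝ³` with `Σ a_j = 0`,
`Σ a_j y_j = 0` and `D̃(α,Y) a = 0` (hence a zero-energy eigenvalue exists). -/
theorem stmt_12
    (y : Fin 3 → EuclideanSpace ℝ (Fin 2)) (hy : Function.Injective y)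
    (hcol : Collinear ℝ (Set.range y)) :
    ∃ α : Fin 3 → ℝ, ∃ a : Fin 3 → ℝ, a ≠ 0 ∧
      (∑ j, a j = 0) ∧ (∑ j, a j • y j = 0) ∧ (DtR 3 y α).mulVec a = 0 := by
  obtain ⟨v, hv⟩ := (collinear_iff_of_mem (Set.mem_range_self 0)).mp hcol
  choose t ht using fun j => hv (y j) (Set.mem_range_self j)
  have htinj : Function.Injective t := by
    intro j k hjk
    apply hy
    rw [ht j, ht k, hjk]
  set a : Fin 3 → ℝ := ![t 1 - t 2, t 2 - t 0, t 0 - t 1] with ha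
  have ha0 : a 0 ≠ 0 := sub_ne_zero.mpr fun h => absurd (htinj h) (by decide)
  have ha1 : a 1 ≠ 0 := sub_ne_zero.mpr fun h => absurd (htinj h) (by decide)
  have ha2 : a 2 ≠ 0 := sub_ne_zero.mpr fun h => absurd (htinj h) (by decide)
  set c : Fin 3 → Fin 3 → ℝ := fun j k => 1/(2*Real.pi) * Real.log ‖y j - y k‖ with hc
  set α : Fin 3 → ℝ := fun j =>
    -(∑ k, (if j = k then (0:ℝ) else c j k) * a k) / a j with hα
  refine ⟨α, a, ?_, ?_, ?_, ?_⟩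
  · intro h
    exact ha0 (by rw [h]; rfl)
  · simp [Fin.sum_univ_three, ha]
  · have hy' : ∀ j, y j = t j • v +ᵥ y 0 := ht
    rw [Fin.sum_univ_three, hy' 0, hy' 1, hy' 2]
    simp only [ha, Matrix.cons_val_zero, Matrix.cons_val_one, Matrix.head_cons,
      Matrix.cons_val_two, Matrix.tail_cons, vadd_eq_add]
    module
  · funext j
    have haj : a j ≠ 0 := by fin_cases j <;> assumption
    have : (DtR 3 y α).mulVec a j
        = α j * a j + ∑ k, (if j = k then (0:ℝ) else c j k) * a k := by
      simp only [Matrix.mulVec, dotProduct, DtR, Matrix.of_apply, hc]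
      fin_cases j <;> simp [Fin.sum_univ_three] <;> ring
    rw [this, hα]
    field_simp
    simp
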